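/- The identity z·erf(z) = (1/√π)·(e^{−z²} ∗ |z|) − (1/√π)·e^{−z²} holds for all real z, where ∗ denotes convolution on ℝ. -/

import Mathlib

open MeasureTheory Real Filter Set Topology

/-- The Gaussian error function on ℝ. -/
noncomputable def erf (x : ℝ) : ℝ :=
  (2 / Real.sqrt Real.pi) * ∫ t in (0:ℝ)..x, Real.exp (-t^2)

noncomputable def Efn (x : ℝ) : ℝ := ∫ t in (0:ℝ)..x, Real.exp (-t^2)

lemma Efn_hasDerivAt (x : ℝ) : HasDerivAt Efn (Real.exp (-x^2)) x := by
  have hc : Continuous fun t : ℝ => Real.exp (-t^2) := by continuity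
  exact (hc.integral_hasStrictDerivAt 0 x).hasDerivAt

lemma gauss_int : Integrable (fun u : ℝ => Real.exp (-u^2)) := by
  simpa using integrable_exp_neg_mul_sq one_pos

lemma Efn_top : Tendsto Efn atTop (𝓝 (Real.sqrt Real.pi / 2)) := by
  have h := intervalIntegral_tendsto_integral_Ioi 0 gauss_int.integrableOn
    (tendsto_id (α := ℝ))
  have h2 : (∫ x in Ioi (0:ℝ), Real.exp (-x^2)) = Real.sqrt Real.pi / 2 := by
    simpa using integral_gaussian_Ioi 1
  rw [h2] at h
  exact h

lemma Efn_neg (x : ℝ) : Efn (-x) = - Efn x := by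
  have h := intervalIntegral.integral_comp_neg (a := (0:ℝ)) (b := x)
    (fun t => Real.exp (-t^2))
  simp only [neg_neg, neg_sq, neg_zero] at h
  unfold Efn
  rw [intervalIntegral.integral_symm (-x) 0, ← h]

lemma Efn_bot : Tendsto Efn atBot (𝓝 (-(Real.sqrt Real.pi / 2))) := by
  have h : Tendsto (fun y : ℝ => - Efn (-y)) atBot (𝓝 (-(Real.sqrt Real.pi / 2))) :=
    (Efn_top.comp tendsto_neg_atBot_atTop).neg
  refine h.congr fun y => ?_
  rw [Efn_neg, neg_neg]

lemma gdecay (z : ℝ) : Tendsto (fun t : ℝ => Real.exp (-(t - z)^2)) atTop (𝓝 0) := by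
  apply Real.tendsto_exp_atBot.comp
  have h1 : Tendsto (fun t : ℝ => t - z) atTop atTop :=
    tendsto_atTop_add_const_right _ (-z) tendsto_id
  have h2 : Tendsto (fun t : ℝ => (t - z)^2) atTop atTop := by
    simpa [pow_two] using h1.atTop_mul_atTop₀ h1
  exact tendsto_neg_atBot_iff.mpr h2

lemma gdecay_bot (z : ℝ) : Tendsto (fun t : ℝ => Real.exp (-(t - z)^2)) atBot (𝓝 0) := by
  apply Real.tendsto_exp_atBot.comp
  have h1 : Tendsto (fun t : ℝ => t - z) atBot atBot :=
    tendsto_atBot_add_const_right _ (-z) tendsto_id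
  have h2 : Tendsto (fun t : ℝ => (t - z)^2) atBot atTop := by
    simpa [pow_two] using h1.atBot_mul_atBot₀ h1
  exact tendsto_neg_atBot_iff.mpr h2

lemma Efn_shift_top (z : ℝ) : Tendsto (fun t : ℝ => Efn (t - z)) atTop (𝓝 (Real.sqrt Real.pi / 2)) :=
  Efn_top.comp (tendsto_atTop_add_const_right _ (-z) tendsto_id)

lemma Efn_shift_bot (z : ℝ) : Tendsto (fun t : ℝ => Efn (t - z)) atBot (𝓝 (-(Real.sqrt Real.pi / 2))) :=
  Efn_bot.comp (tendsto_atBot_add_const_right _ (-z) tendsto_id)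

lemma hint (z : ℝ) : Integrable (fun t : ℝ => t * Real.exp (-(t - z)^2)) := by
  have h1 : Integrable (fun u : ℝ => u * Real.exp (-u^2)) := by
    simpa using integrable_mul_exp_neg_mul_sq one_pos
  have h := ((h1.comp_sub_right z).add ((gauss_int.comp_sub_right z).const_mul z))
  refine h.congr (Filter.Eventually.of_forall fun t => ?_)
  simp only [Pi.add_apply]
  ring

lemma hg_deriv (z t : ℝ) :
    HasDerivAt (fun t : ℝ => Real.exp (-(t - z)^2)) (-(2*(t-z)) * Real.exp (-(t-z)^2)) t := by
  have h1 : HasDerivAt (fun t : ℝ => -(t - z)^2) (-(2*(t-z))) t := by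
    have := (((hasDerivAt_id t).sub_const z).fun_pow 2).fun_neg
    simpa using this
  simpa [mul_comm] using h1.exp

lemma hE_deriv (z t : ℝ) :
    HasDerivAt (fun t : ℝ => Efn (t - z)) (Real.exp (-(t-z)^2)) t := by
  have := (Efn_hasDerivAt (t - z)).comp t ((hasDerivAt_id t).sub_const z)
  simpa [Function.comp_def] using this

theorem stmt3 (z : ℝ) :
    z * erf z =
      (1 / Real.sqrt Real.pi) * (∫ t : ℝ, Real.exp (-(z - t)^2) * |t|)
        - (1 / Real.sqrt Real.pi) * Real.exp (-z^2) := by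
  have sqpos : (0:ℝ) < Real.sqrt Real.pi := Real.sqrt_pos.mpr Real.pi_pos
  -- integrability of the full integrand
  have hIntAbs : Integrable (fun t : ℝ => Real.exp (-(z - t)^2) * |t|) := by
    refine (hint z).abs.congr (Filter.Eventually.of_forall fun t => ?_)
    show |t * Real.exp (-(t - z)^2)| = Real.exp (-(z - t)^2) * |t|
    rw [abs_mul, abs_of_pos (Real.exp_pos _)]
    have : (z - t)^2 = (t - z)^2 := by ring
    rw [this]; ring
  -- Ioi part
  have hIoi_congr : (∫ t in Ioi (0:ℝ), Real.exp (-(z - t)^2) * |t|)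
      = ∫ t in Ioi (0:ℝ), t * Real.exp (-(t - z)^2) := by
    refine setIntegral_congr_fun measurableSet_Ioi fun t ht => ?_
    have h1 : (z - t)^2 = (t - z)^2 := by ring
    rw [h1, abs_of_pos ht]; ring
  have hIoi : (∫ t in Ioi (0:ℝ), t * Real.exp (-(t - z)^2))
      = z * (Real.sqrt Real.pi / 2) - (-(1/2) * Real.exp (-z^2) + z * Efn (-z)) := by
    have hF : ∀ t ∈ Ici (0:ℝ),
        HasDerivAt (fun t : ℝ => -(1/2) * Real.exp (-(t-z)^2) + z * Efn (t - z))
          (t * Real.exp (-(t - z)^2)) t := by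
      intro t _
      have := ((hg_deriv z t).const_mul (-(1/2):ℝ)).fun_add ((hE_deriv z t).const_mul z)
      refine this.congr_deriv ?_
      ring
    have htend : Tendsto (fun t : ℝ => -(1/2) * Real.exp (-(t-z)^2) + z * Efn (t - z))
        atTop (𝓝 (z * (Real.sqrt Real.pi / 2))) := by
      have := (((gdecay z).const_mul (-(1/2):ℝ)).add ((Efn_shift_top z).const_mul z))
      simpa using this
    have := integral_Ioi_of_hasDerivAt_of_tendsto' hF (hint z).integrableOn htend
    simpa using this
  -- Iic part
  have hIic_congr : (∫ t in Iic (0:ℝ), Real.exp (-(z - t)^2) * |t|)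
      = ∫ t in Iic (0:ℝ), -t * Real.exp (-(t - z)^2) := by
    refine setIntegral_congr_fun measurableSet_Iic fun t ht => ?_
    have h1 : (z - t)^2 = (t - z)^2 := by ring
    rw [h1, abs_of_nonpos ht]; ring
  have hIic : (∫ t in Iic (0:ℝ), -t * Real.exp (-(t - z)^2))
      = ((1/2) * Real.exp (-z^2) - z * Efn (-z)) - (z * (Real.sqrt Real.pi / 2)) := by
    have hG : ∀ t ∈ Iic (0:ℝ),
        HasDerivAt (fun t : ℝ => (1/2) * Real.exp (-(t-z)^2) - z * Efn (t - z))
          (-t * Real.exp (-(t - z)^2)) t := by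
      intro t _
      have := ((hg_deriv z t).const_mul ((1/2):ℝ)).fun_sub ((hE_deriv z t).const_mul z)
      refine this.congr_deriv ?_
      ring
    have htend : Tendsto (fun t : ℝ => (1/2) * Real.exp (-(t-z)^2) - z * Efn (t - z))
        atBot (𝓝 (z * (Real.sqrt Real.pi / 2))) := by
      have := (((gdecay_bot z).const_mul ((1/2):ℝ)).sub ((Efn_shift_bot z).const_mul z))
      simpa using this
    have hint' : IntegrableOn (fun t : ℝ => -t * Real.exp (-(t - z)^2)) (Iic 0) := by
      refine ((hint z).neg.congr (Filter.Eventually.of_forall fun t => ?_)).integrableOn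
      simp only [Pi.neg_apply]
      ring
    have := integral_Iic_of_hasDerivAt_of_tendsto' hG hint' htend
    simpa using this
  -- assemble
  have hsplit : (∫ t in Iic (0:ℝ), Real.exp (-(z - t)^2) * |t|)
      + (∫ t in Ioi (0:ℝ), Real.exp (-(z - t)^2) * |t|)
      = ∫ t : ℝ, Real.exp (-(z - t)^2) * |t| :=
    intervalIntegral.integral_Iic_add_Ioi hIntAbs.integrableOn hIntAbs.integrableOn
  have hEneg : Efn (-z) = - Efn z := Efn_neg z
  have hTotal : (∫ t : ℝ, Real.exp (-(z - t)^2) * |t|)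
      = Real.exp (-z^2) + 2 * z * Efn z := by
    rw [← hsplit, hIic_congr, hIoi_congr, hIic, hIoi, hEneg]
    ring
  rw [hTotal]
  show z * ((2 / Real.sqrt Real.pi) * Efn z) = _
  field_simp
  ring
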